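/- For n ≥ 11 and a = n/4 - 1/n, the quantity 1/2 - (1/8 + (12a+n-2)²/(128(n-2+4a)a))·((n-2)(n-4a)/a) equals ((n+1)(n+2)(n-10)-2)/(2(n+1)(n+2)²) and is strictly positive. -/

import Mathlib

/-- For `n ≥ 11` and `a = n/4 - 1/n`, the key coefficient
`1/2 - (1/8 + (12a+n-2)²/(128(n-2+4a)a))·((n-2)(n-4a)/a)` equals
`((n+1)(n+2)(n-10)-2)/(2(n+1)(n+2)²)` and is strictly positive. -/
theorem stmt11 (n : ℕ) (hn : 11 ≤ n) (a : ℝ) (ha : a = (n : ℝ) / 4 - 1 / n) :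
    1 / 2 - (1 / 8 + (12 * a + (n : ℝ) - 2) ^ 2 / (128 * ((n : ℝ) - 2 + 4 * a) * a)) *
        (((n : ℝ) - 2) * ((n : ℝ) - 4 * a) / a)
      = (((n : ℝ) + 1) * ((n : ℝ) + 2) * ((n : ℝ) - 10) - 2) /
          (2 * ((n : ℝ) + 1) * ((n : ℝ) + 2) ^ 2) ∧
    0 < (((n : ℝ) + 1) * ((n : ℝ) + 2) * ((n : ℝ) - 10) - 2) /
          (2 * ((n : ℝ) + 1) * ((n : ℝ) + 2) ^ 2) := by
  have hx : (11 : ℝ) ≤ (n : ℝ) := by exact_mod_cast hn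
  have hn0 : (n : ℝ) ≠ 0 := by positivity
  have ha' : a = ((n : ℝ) ^ 2 - 4) / (4 * n) := by rw [ha]; field_simp
  have h1 : (n : ℝ) - 4 * a = 4 / n := by rw [ha']; field_simp; ring
  have h2 : (n : ℝ) - 2 + 4 * a = 2 * ((n : ℝ) + 1) * ((n : ℝ) - 2) / n := by
    rw [ha']; field_simp; ring
  have hm2 : (n : ℝ) - 2 ≠ 0 := by nlinarith
  have hp1 : ((n : ℝ) + 1) ≠ 0 := by positivity
  have hp2 : ((n : ℝ) + 2) ≠ 0 := by positivity
  have han : ((n : ℝ) ^ 2 - 4) ≠ 0 := by nlinarith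
  constructor
  · rw [h1, h2, ha']
    field_simp
    ring
  · apply div_pos
    · nlinarith
    · positivity
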